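/- The all-ones vector 1 ∈ R^{s(s-1)/2} satisfies with equality every inequality defining the cone P(C) of a partial chain C = π_s ⋖ … ⋖ π_t (s > t) except the single nonnegativity inequality d(λ_{j(s)}, λ_{k(s)}) ≥ 0 on the coordinate of the first merged pair, which it satisfies strictly; consequently 1 is an extreme ray of P(C). -/

import Mathlib

open Finset

/-- Coordinates of `ℝ^{m(m-1)/2}`: pairs `j < k` of elements of `Fin m`
(the parts of the bottom partition `π_s` of the partial chain). -/
abbrev UPGMAIndex (m : ℕ) := {p : Fin m × Fin m // p.1 < p.2}

/-- Value of a dissimilarity vector on an unordered pair `{j,k}`. -/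
noncomputable def pairVal {m : ℕ} (d : UPGMAIndex m → ℝ) (j k : Fin m) : ℝ :=
  if h : j < k then d ⟨(j, k), h⟩ else if h' : k < j then d ⟨(k, j), h'⟩ else 0

/-- Size-weighted average distance between two disjoint unions of parts,
with weights `w j = |λ_j^s|`:
`(1/(W λ · W λ')) ∑_{j ∈ λ, k ∈ λ'} w j · w k · d(j,k)`. -/
noncomputable def avgDist {m : ℕ} (w : Fin m → ℕ) (d : UPGMAIndex m → ℝ)
    (lam lam' : Finset (Fin m)) : ℝ :=
  (∑ j ∈ lam, ∑ k ∈ lam', (w j : ℝ) * (w k : ℝ) * pairVal d j k) /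
    ((∑ j ∈ lam, (w j : ℝ)) * (∑ k ∈ lam', (w k : ℝ)))

/-- `v` spans an extreme ray of the cone `P`. -/
def IsExtremeRay {α : Type*} (P : Set (α → ℝ)) (v : α → ℝ) : Prop :=
  v ∈ P ∧ v ≠ 0 ∧ ∀ x ∈ P, ∀ y ∈ P, x + y = v →
    (∃ a : ℝ, 0 ≤ a ∧ x = a • v) ∧ (∃ b : ℝ, 0 ≤ b ∧ y = b • v)

/-- The UPGMA cone `P(C)` of a partial chain `C = π_s ⋖ ⋯ ⋖ π_t`: nonnegativity of all
coordinates, and for each covering relation the inequalities saying the merged pair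
`(A i, B i)` has minimal size-weighted average distance among all pairs of parts. -/
noncomputable def upgmaCone {m k : ℕ} (w : Fin m → ℕ)
    (π : Fin (k + 1) → Finpartition (Finset.univ : Finset (Fin m)))
    (A B : Fin k → Finset (Fin m)) : Set (UPGMAIndex m → ℝ) :=
  {d | (∀ e, 0 ≤ d e) ∧
    ∀ i : Fin k, ∀ A' ∈ (π i.castSucc).parts, ∀ B' ∈ (π i.castSucc).parts,
      A' ≠ B' → avgDist w d (A i) (B i) ≤ avgDist w d A' B'}

lemma pairVal_one {m : ℕ} {j k : Fin m} (h : j ≠ k) :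
    pairVal (fun _ => (1 : ℝ)) j k = 1 := by
  unfold pairVal
  rcases h.lt_or_gt with h' | h'
  · rw [dif_pos h']
  · rw [dif_neg (asymm h'), dif_pos h']

lemma avgDist_singleton {m : ℕ} (w : Fin m → ℕ) (hw : ∀ j, 0 < w j)
    (d : UPGMAIndex m → ℝ) (j k : Fin m) :
    avgDist w d {j} {k} = pairVal d j k := by
  have hne : (w j : ℝ) * (w k : ℝ) ≠ 0 := by
    have := hw j; have := hw k; positivity
  simp only [avgDist, Finset.sum_singleton]
  field_simp
  exact mul_div_cancel_left₀ _ hne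

lemma avgDist_one {m : ℕ} (w : Fin m → ℕ) (hw : ∀ j, 0 < w j)
    {lam lam' : Finset (Fin m)} (h : Disjoint lam lam')
    (h1 : lam.Nonempty) (h2 : lam'.Nonempty) :
    avgDist w (fun _ => (1 : ℝ)) lam lam' = 1 := by
  have hs : (∑ j ∈ lam, ∑ k ∈ lam', (w j : ℝ) * (w k : ℝ) *
      pairVal (fun _ => (1 : ℝ)) j k)
      = (∑ j ∈ lam, (w j : ℝ)) * (∑ k ∈ lam', (w k : ℝ)) := by
    rw [Finset.sum_mul_sum]
    refine Finset.sum_congr rfl fun j hj => Finset.sum_congr rfl fun k' hk => ?_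
    have hjk : j ≠ k' := fun h' => Finset.disjoint_left.mp h hj (h' ▸ hk)
    rw [pairVal_one hjk, mul_one]
  have hpos1 : (0 : ℝ) < ∑ j ∈ lam, (w j : ℝ) :=
    Finset.sum_pos (fun j _ => by exact_mod_cast hw j) h1
  have hpos2 : (0 : ℝ) < ∑ j ∈ lam', (w j : ℝ) :=
    Finset.sum_pos (fun j _ => by exact_mod_cast hw j) h2
  rw [avgDist, hs, div_self (by positivity)]

/-- The all-ones vector `𝟏 ∈ ℝ^{s(s-1)/2}` satisfies every averaged-distance defining
inequality of the cone `P(C)` of a partial chain `C = π_s ⋖ ⋯ ⋖ π_t` (with `s > t`) with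
equality, satisfies strictly the nonnegativity inequality on the coordinate of the first
merged pair `(λ_{j(s)}, λ_{k(s)})`, and consequently `𝟏` is an extreme ray of `P(C)`. -/
theorem stmt9 (m k : ℕ) (hm : 2 ≤ m) (hk : 0 < k)
    (w : Fin m → ℕ) (hw : ∀ j, 0 < w j)
    (π : Fin (k + 1) → Finpartition (Finset.univ : Finset (Fin m)))
    (hbot : (π 0).parts = Finset.univ.image (fun j : Fin m => ({j} : Finset (Fin m))))
    (A B : Fin k → Finset (Fin m))
    (hmem : ∀ i : Fin k,
      A i ∈ (π i.castSucc).parts ∧ B i ∈ (π i.castSucc).parts ∧ A i ≠ B i)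
    (hcov : ∀ i : Fin k,
      (π i.succ).parts = insert (A i ∪ B i) ((π i.castSucc).parts \ {A i, B i}))
    (j₀ k₀ : Fin m) (h₀ : j₀ < k₀)
    (hA0 : A ⟨0, hk⟩ = {j₀}) (hB0 : B ⟨0, hk⟩ = {k₀}) :
    (∀ i : Fin k, ∀ A' ∈ (π i.castSucc).parts, ∀ B' ∈ (π i.castSucc).parts, A' ≠ B' →
        avgDist w (fun _ => (1 : ℝ)) (A i) (B i) = avgDist w (fun _ => (1 : ℝ)) A' B') ∧
    (0 : ℝ) < (fun _ : UPGMAIndex m => (1 : ℝ)) ⟨(j₀, k₀), h₀⟩ ∧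
    IsExtremeRay (upgmaCone w π A B) (fun _ => (1 : ℝ)) := by
  -- any two distinct parts of a partition give average 1
  have key : ∀ (i : Fin (k + 1)), ∀ A' ∈ (π i).parts, ∀ B' ∈ (π i).parts, A' ≠ B' →
      avgDist w (fun _ => (1 : ℝ)) A' B' = 1 := by
    intro i A' hA' B' hB' hne
    exact avgDist_one w hw ((π i).disjoint hA' hB' hne)
      ((π i).nonempty_of_mem_parts hA') ((π i).nonempty_of_mem_parts hB')
  have eq1 : ∀ i : Fin k, ∀ A' ∈ (π i.castSucc).parts, ∀ B' ∈ (π i.castSucc).parts,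
      A' ≠ B' → avgDist w (fun _ => (1 : ℝ)) (A i) (B i)
        = avgDist w (fun _ => (1 : ℝ)) A' B' := by
    intro i A' hA' B' hB' hne
    obtain ⟨hAi, hBi, hABne⟩ := hmem i
    rw [key i.castSucc (A i) hAi (B i) hBi hABne, key i.castSucc A' hA' B' hB' hne]
  refine ⟨eq1, one_pos, ?_, ?_, ?_⟩
  · -- membership
    refine ⟨fun _ => zero_le_one, fun i A' hA' B' hB' hne => ?_⟩
    rw [eq1 i A' hA' B' hB' hne]
  · -- nonzero
    intro h
    have := congrFun h ⟨(j₀, k₀), h₀⟩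
    simp at this
  · -- extreme
    intro x hx y hy hxy
    have h0cast : ((⟨0, hk⟩ : Fin k) : Fin k).castSucc = (0 : Fin (k + 1)) := rfl
    have hsing : ∀ j : Fin m, ({j} : Finset (Fin m)) ∈ (π 0).parts := by
      intro j; rw [hbot]; exact Finset.mem_image_of_mem _ (Finset.mem_univ j)
    have hsum : ∀ e : UPGMAIndex m, x e + y e = 1 := fun e => congrFun hxy e
    -- avg over the merged pair for x and y
    set c : ℝ := avgDist w x (A ⟨0, hk⟩) (B ⟨0, hk⟩) with hc
    set c' : ℝ := avgDist w y (A ⟨0, hk⟩) (B ⟨0, hk⟩) with hc'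
    have hcc' : c + c' = 1 := by
      rw [hc, hc', hA0, hB0, avgDist_singleton w hw, avgDist_singleton w hw]
      simp only [pairVal, dif_pos h₀]
      exact hsum ⟨(j₀, k₀), h₀⟩
    have hcoord : ∀ e : UPGMAIndex m, x e = c ∧ y e = c' := by
      rintro ⟨⟨j, kk⟩, hjk⟩
      have hne : ({j} : Finset (Fin m)) ≠ {kk} :=
        fun h => (ne_of_lt hjk) (Finset.singleton_injective h)
      have h1 : c ≤ avgDist w x {j} {kk} := by
        have := hx.2 ⟨0, hk⟩ {j} (by rw [h0cast]; exact hsing j)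
          {kk} (by rw [h0cast]; exact hsing kk) hne
        exact this
      have h2 : c' ≤ avgDist w y {j} {kk} := by
        have := hy.2 ⟨0, hk⟩ {j} (by rw [h0cast]; exact hsing j)
          {kk} (by rw [h0cast]; exact hsing kk) hne
        exact this
      rw [avgDist_singleton w hw] at h1 h2
      simp only [pairVal, dif_pos hjk] at h1 h2
      have hs : x ⟨(j, kk), hjk⟩ + y ⟨(j, kk), hjk⟩ = 1 := hsum _
      constructor <;> [skip; skip] <;> linarith
    have hc0 : 0 ≤ c := by
      have := hx.1 ⟨(j₀, k₀), h₀⟩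
      rw [(hcoord ⟨(j₀, k₀), h₀⟩).1] at this; exact this
    have hc'0 : 0 ≤ c' := by
      have := hy.1 ⟨(j₀, k₀), h₀⟩
      rw [(hcoord ⟨(j₀, k₀), h₀⟩).2] at this; exact this
    refine ⟨⟨c, hc0, ?_⟩, ⟨c', hc'0, ?_⟩⟩
    · funext e; simp [(hcoord e).1]
    · funext e; simp [(hcoord e).2]
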